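/- Let x = (x₀, …, x_ℓ) and x' = (x'₀, …, x'_ℓ) be tuples with x_j, x'_j ∈ X_j for all j and x₀⋯x_ℓ = x'₀⋯x'_ℓ. Then there exists a unique tuple ĥ = (ĥ₀, …, ĥ_ℓ) with ĥ_j ∈ X_j, ĥ₀ĥ₁⋯ĥ_ℓ = 1, and x ⊗ ĥ = x'; that is, the fiber S_g of the product map acts simply transitively on itself by right twisted multiplication by elements of S_1. -/
import Mathlib


/-- `tailProd x j = S_j(x) = x_{j+1} x_{j+2} ⋯ x_ℓ` (with `tailProd x ℓ = 1`). -/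
def tailProd {B : Type*} [Group B] {n : ℕ} (x : Fin n → B) (j : Fin n) : B :=
  ((List.ofFn x).drop ((j : ℕ) + 1)).prod

/-- The twisted product: `(x ⊗ y)_j = x_j · S_j(x) y_j S_j(x)⁻¹`. -/
def twmul {B : Type*} [Group B] {n : ℕ} (x y : Fin n → B) : Fin n → B :=
  fun j => x j * (tailProd x j * y j * (tailProd x j)⁻¹)

lemma tailProd_succ {B : Type*} [Group B] {n : ℕ} (x : Fin (n + 1) → B) (j : Fin n) :
    tailProd x j.succ = tailProd (fun i => x i.succ) j := by
  simp [tailProd, List.ofFn_succ, Fin.val_succ]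

lemma tailProd_zero {B : Type*} [Group B] {n : ℕ} (x : Fin (n + 1) → B) :
    tailProd x 0 = (List.ofFn fun i => x i.succ).prod := by
  simp [tailProd, List.ofFn_succ]

lemma key_prod {B : Type*} [Group B] :
    ∀ (n : ℕ) (x x' : Fin n → B),
      (List.ofFn fun j => (tailProd x j)⁻¹ * ((x j)⁻¹ * x' j) * tailProd x j).prod
        = (List.ofFn x).prod⁻¹ * (List.ofFn x').prod
  | 0, x, x' => by simp
  | n + 1, x, x' => by
    rw [List.ofFn_succ, List.ofFn_succ (f := x), List.ofFn_succ (f := x')]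
    simp only [List.prod_cons, tailProd_succ]
    rw [key_prod n (fun i => x i.succ) (fun i => x' i.succ), tailProd_zero]
    group

theorem stmt19 {B : Type*} [Group B] (ℓ : ℕ) (X : Fin (ℓ + 1) → Subgroup B)
    (hmono : ∀ j k : Fin (ℓ + 1), j ≤ k → X j ≤ X k)
    (htop : X (Fin.last ℓ) = ⊤)
    (hnorm : ∀ j : Fin (ℓ + 1), (X j).Normal)
    (x x' : Fin (ℓ + 1) → B)
    (hx : ∀ j, x j ∈ X j) (hx' : ∀ j, x' j ∈ X j)
    (hprod : (List.ofFn x).prod = (List.ofFn x').prod) :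
    ∃! h : Fin (ℓ + 1) → B,
      (∀ j, h j ∈ X j) ∧ (List.ofFn h).prod = 1 ∧ twmul x h = x' := by
  refine ⟨fun j => (tailProd x j)⁻¹ * ((x j)⁻¹ * x' j) * tailProd x j, ⟨?_, ?_, ?_⟩, ?_⟩
  · intro j
    have := (hnorm j).conj_mem _ (mul_mem (inv_mem (hx j)) (hx' j)) (tailProd x j)⁻¹
    simpa using this
  · rw [key_prod, hprod, inv_mul_cancel]
  · funext j
    simp only [twmul]
    group
  · rintro y ⟨-, -, hy3⟩
    funext j
    have h1 := congrFun hy3 j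
    simp only [twmul] at h1
    rw [← h1]
    group
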